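/- Exponential weights achieves, for every horizon T ≥ 1 and every expert i ∈ {1,…,M}, irrespective of the values of the signal and of the experts' predictions, the regret bound L_T − L_{i,T} ≤ (1/η) · log(1/π_i). -/

import Mathlib

/-- **Exponential weights regret bound (Proposition 1, first part).**
For an η-exp-concave loss, the exponential weights algorithm with prior π
achieves, for every horizon T ≥ 1 and every expert i, irrespective of the
signal and the experts' predictions, the bound L_T − L_{i,T} ≤ (1/η)·log(1/π_i). -/
theorem exponential_weights_regret
    {E : Type*} [AddCommGroup E] [Module ℝ E] {Y : Type*}
    (X : Set E) (ℓ : E → Y → ℝ) (η : ℝ) (hη : 0 < η)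
    (hexp : ∀ (yy : Y) (N : ℕ), 1 ≤ N → ∀ xs : Fin N → E, (∀ i, xs i ∈ X) →
      ∀ vv : Fin N → ℝ, (∀ i, 0 ≤ vv i) → (∑ i, vv i) = 1 →
      ℓ (∑ i, vv i • xs i) yy ≤ -(1/η) * Real.log (∑ i, vv i * Real.exp (-η * ℓ (xs i) yy)))
    (M : ℕ) (hM : 1 ≤ M)
    (π : Fin M → ℝ) (hπpos : ∀ i, 0 < π i) (hπsum : ∑ i, π i = 1)
    (xe : Fin M → ℕ → E) (hxe : ∀ i t, xe i t ∈ X)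
    (y : ℕ → Y) (xl : ℕ → E)
    -- the learner predicts with exponential weights w_{i,t} = π_i · exp(−η L_{i,t−1})
    (hxl : ∀ t, 1 ≤ t → xl t =
      (∑ i, π i * Real.exp (-η * ∑ s ∈ Finset.Icc 1 (t-1), ℓ (xe i s) (y s)))⁻¹ •
        ∑ i, (π i * Real.exp (-η * ∑ s ∈ Finset.Icc 1 (t-1), ℓ (xe i s) (y s))) • xe i t) :
    ∀ T : ℕ, 1 ≤ T → ∀ i : Fin M,
      (∑ t ∈ Finset.Icc 1 T, ℓ (xl t) (y t)) - (∑ t ∈ Finset.Icc 1 T, ℓ (xe i t) (y t))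
        ≤ (1/η) * Real.log (1 / π i) := by
  intro T hT i
  haveI : NeZero M := ⟨by omega⟩
  set L : Fin M → ℕ → ℝ := fun j t => ∑ s ∈ Finset.Icc 1 t, ℓ (xe j s) (y s) with hL
  set W : ℕ → ℝ := fun t => ∑ j, π j * Real.exp (-η * L j t) with hW
  have hWpos : ∀ t, 0 < W t := fun t =>
    Finset.sum_pos (fun j _ => mul_pos (hπpos j) (Real.exp_pos _)) Finset.univ_nonempty
  have hW0 : W 0 = 1 := by
    simp [hW, hL, hπsum]
  -- per-step bound
  have hstep : ∀ t : ℕ, 1 ≤ t →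
      ℓ (xl t) (y t) ≤ -(1/η) * (Real.log (W t) - Real.log (W (t-1))) := by
    intro t ht
    set a : Fin M → ℝ := fun j => π j * Real.exp (-η * L j (t-1)) with ha
    have hWt1 : W (t-1) = ∑ j, a j := rfl
    set vv : Fin M → ℝ := fun j => (W (t-1))⁻¹ * a j with hvv
    have hvnn : ∀ j, 0 ≤ vv j := fun j =>
      mul_nonneg (inv_nonneg.2 (hWpos _).le) (mul_nonneg (hπpos j).le (Real.exp_pos _).le)
    have hvsum : ∑ j, vv j = 1 := by
      rw [hvv]
      simp only [← Finset.mul_sum]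
      rw [← hWt1, inv_mul_cancel₀ (hWpos _).ne']
    have hxlt : xl t = ∑ j, vv j • xe j t := by
      rw [hxl t ht, Finset.smul_sum]
      simp only [smul_smul]
      rfl
    have key := hexp (y t) M hM (fun j => xe j t) (fun j => hxe j t) vv hvnn hvsum
    rw [← hxlt] at key
    have hsum : (∑ j, vv j * Real.exp (-η * ℓ (xe j t) (y t))) = (W (t-1))⁻¹ * W t := by
      rw [hW]
      simp only [hvv, Finset.mul_sum]
      refine Finset.sum_congr rfl fun j _ => ?_
      have hLt : L j t = L j (t-1) + ℓ (xe j t) (y t) := by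
        obtain ⟨u, rfl⟩ : ∃ u, t = u + 1 := ⟨t - 1, by omega⟩
        simp only [hL, Nat.add_sub_cancel]
        rw [Finset.sum_Icc_succ_top (Nat.le_add_left 1 u)]
      rw [hLt]
      rw [mul_add, Real.exp_add]
      ring
    rw [hsum] at key
    have hlog : Real.log ((W (t-1))⁻¹ * W t) = Real.log (W t) - Real.log (W (t-1)) := by
      rw [Real.log_mul (inv_ne_zero (hWpos _).ne') (hWpos _).ne', Real.log_inv]
      ring
    rw [hlog] at key
    exact key
  -- sum over t
  have hsumbound : (∑ t ∈ Finset.Icc 1 T, ℓ (xl t) (y t)) ≤ -(1/η) * Real.log (W T) := by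
    calc (∑ t ∈ Finset.Icc 1 T, ℓ (xl t) (y t))
        ≤ ∑ t ∈ Finset.Icc 1 T, -(1/η) * (Real.log (W t) - Real.log (W (t-1))) := by
          refine Finset.sum_le_sum fun t htmem => ?_
          exact hstep t (Finset.mem_Icc.1 htmem).1
      _ = -(1/η) * ∑ t ∈ Finset.Icc 1 T, (Real.log (W t) - Real.log (W (t-1))) := by
          rw [Finset.mul_sum]
      _ = -(1/η) * Real.log (W T) := by
          congr 1
          have tel : ∀ (g : ℕ → ℝ) (n : ℕ),
              ∑ t ∈ Finset.Icc 1 n, (g t - g (t-1)) = g n - g 0 := by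
            intro g n
            induction n with
            | zero => simp
            | succ n ih =>
              rw [Finset.sum_Icc_succ_top (Nat.le_add_left 1 n), ih]
              simp only [Nat.add_sub_cancel]
              ring
          rw [tel (fun k => Real.log (W k)) T]
          simp [hW0]
  -- lower bound W T
  have hWTlb : π i * Real.exp (-η * L i T) ≤ W T := by
    refine Finset.single_le_sum (f := fun j => π j * Real.exp (-η * L j T))
      (fun j _ => mul_nonneg (hπpos j).le (Real.exp_pos _).le) (Finset.mem_univ i)
  have hloglb : Real.log (π i) + (-η * L i T) ≤ Real.log (W T) := by
    have := Real.log_le_log (mul_pos (hπpos i) (Real.exp_pos _)) hWTlb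
    rwa [Real.log_mul (hπpos i).ne' (Real.exp_pos _).ne', Real.log_exp] at this
  have hfinal : -(1/η) * Real.log (W T) ≤ -(1/η) * (Real.log (π i) + (-η * L i T)) := by
    apply mul_le_mul_of_nonpos_left hloglb
    simp [le_of_lt, hη, one_div, inv_pos]
  have : (∑ t ∈ Finset.Icc 1 T, ℓ (xl t) (y t)) ≤ -(1/η) * Real.log (π i) + L i T := by
    calc _ ≤ -(1/η) * Real.log (W T) := hsumbound
      _ ≤ -(1/η) * (Real.log (π i) + (-η * L i T)) := hfinal
      _ = -(1/η) * Real.log (π i) + L i T := by field_simp; ring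
  rw [one_div (π i), Real.log_inv]
  have hLiT : (∑ t ∈ Finset.Icc 1 T, ℓ (xe i t) (y t)) = L i T := rfl
  rw [hLiT]
  linarith [this]
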